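/- Let λ and β be positive random variables on a probability space (Ω, 𝓕, ℙ) and let F(t) = 𝔼[1 − exp(−λ (t/(1−t))^β)] for t ∈ (0,1). Then the equation F(d) + d = 1 has exactly one solution d in the interval (0,1). -/
import Mathlib


open MeasureTheory Filter Set Topology

theorem mixed_kies_saturation_exists_unique
    {Ω : Type*} [MeasurableSpace Ω] (μ : Measure Ω) [IsProbabilityMeasure μ]
    (lam beta : Ω → ℝ) (hlam_meas : Measurable lam) (hbeta_meas : Measurable beta)
    (hlam_pos : ∀ ω, 0 < lam ω) (hbeta_pos : ∀ ω, 0 < beta ω)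
    (F : ℝ → ℝ)
    (hF : ∀ t, F t = ∫ ω, (1 - Real.exp (-(lam ω) * (t / (1 - t)) ^ (beta ω))) ∂μ) :
    ∃! d : ℝ, d ∈ Set.Ioo (0 : ℝ) 1 ∧ F d + d = 1 := by
  classical
  set f : ℝ → Ω → ℝ := fun t ω => 1 - Real.exp (-(lam ω) * (t / (1 - t)) ^ (beta ω))
    with hfdef
  have hF' : ∀ t, F t = ∫ ω, f t ω ∂μ := hF
  -- measurability for t ∈ (0,1)
  have hmeas : ∀ t ∈ Ioo (0:ℝ) 1, Measurable (f t) := by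
    intro t ht
    have hx : t / (1 - t) ≠ 0 := (div_pos ht.1 (by linarith [ht.2])).ne'
    have hc : Continuous fun y : ℝ => (t / (1 - t)) ^ y :=
      continuous_iff_continuousAt.mpr fun y => Real.continuousAt_const_rpow hx
    exact measurable_const.sub
      ((hlam_meas.neg.mul (hc.measurable.comp hbeta_meas)).exp)
  -- bounds on (0,1)
  have hbd : ∀ t ∈ Ioo (0:ℝ) 1, ∀ ω, 0 ≤ f t ω ∧ f t ω ≤ 1 := by
    intro t ht ω
    have hx : 0 ≤ t / (1 - t) := div_nonneg ht.1.le (by linarith [ht.2])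
    have hxp : 0 ≤ (t / (1 - t)) ^ (beta ω) := Real.rpow_nonneg hx _
    have h1 : -(lam ω) * (t / (1 - t)) ^ (beta ω) ≤ 0 := by
      nlinarith [(hlam_pos ω).le]
    have h2 : Real.exp (-(lam ω) * (t / (1 - t)) ^ (beta ω)) ≤ 1 :=
      Real.exp_le_one_iff.mpr h1
    have h3 := Real.exp_pos (-(lam ω) * (t / (1 - t)) ^ (beta ω))
    constructor
    · simp only [hfdef]; linarith
    · simp only [hfdef]; linarith
  -- integrability
  have hint : ∀ t ∈ Ioo (0:ℝ) 1, Integrable (f t) μ := by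
    intro t ht
    refine (integrable_const (1:ℝ)).mono' ((hmeas t ht).aestronglyMeasurable) ?_
    filter_upwards with ω
    have h := hbd t ht ω
    rw [Real.norm_eq_abs, abs_le]
    constructor <;> linarith [h.1, h.2]
  -- monotonicity of F on (0,1)
  have hmono : ∀ s t, s ∈ Ioo (0:ℝ) 1 → t ∈ Ioo (0:ℝ) 1 → s ≤ t → F s ≤ F t := by
    intro s t hs ht hst
    rw [hF' s, hF' t]
    refine integral_mono (hint s hs) (hint t ht) ?_
    intro ω
    have hx : 0 ≤ s / (1 - s) := div_nonneg hs.1.le (by linarith [hs.2])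
    have hxy : s / (1 - s) ≤ t / (1 - t) := by
      rw [div_le_div_iff₀ (by linarith [hs.2]) (by linarith [ht.2])]
      nlinarith
    have hr : (s / (1 - s)) ^ (beta ω) ≤ (t / (1 - t)) ^ (beta ω) :=
      Real.rpow_le_rpow hx hxy (hbeta_pos ω).le
    have h1 : -(lam ω) * (t / (1 - t)) ^ (beta ω) ≤ -(lam ω) * (s / (1 - s)) ^ (beta ω) := by
      nlinarith [(hlam_pos ω).le]
    have h2 := Real.exp_le_exp.mpr h1
    simp only [hfdef]
    linarith
  -- strict positivity of F on (0,1)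
  have hposF : ∀ t ∈ Ioo (0:ℝ) 1, 0 < F t := by
    intro t ht
    have hfpos : ∀ ω, 0 < f t ω := by
      intro ω
      have hx : 0 < t / (1 - t) := div_pos ht.1 (by linarith [ht.2])
      have hxp : 0 < (t / (1 - t)) ^ (beta ω) := Real.rpow_pos_of_pos hx _
      have h1 : -(lam ω) * (t / (1 - t)) ^ (beta ω) < 0 := by nlinarith [hlam_pos ω]
      have h2 : Real.exp (-(lam ω) * (t / (1 - t)) ^ (beta ω)) < 1 :=
        Real.exp_lt_one_iff.mpr h1
      simp only [hfdef]; linarith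
    rw [hF' t]
    refine (integral_pos_iff_support_of_nonneg (fun ω => (hfpos ω).le) (hint t ht)).mpr ?_
    have hsupp : Function.support (f t) = univ :=
      eq_univ_of_forall fun ω => Function.mem_support.mpr (hfpos ω).ne'
    rw [hsupp, measure_univ]
    norm_num
  -- pointwise continuity in t
  have hptcont : ∀ ω, ∀ t₀ ∈ Ico (0:ℝ) 1, ContinuousAt (fun t => f t ω) t₀ := by
    intro ω t₀ ht₀
    have hne : (1:ℝ) - t₀ ≠ 0 := by
      have := ht₀.2; intro h; linarith
    have hg : ContinuousAt (fun t : ℝ => t / (1 - t)) t₀ :=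
      continuousAt_id.div ((continuous_const.sub continuous_id).continuousAt) hne
    have hcomp : ContinuousAt (fun t : ℝ => (t / (1 - t)) ^ (beta ω)) t₀ :=
      hg.rpow_const (Or.inr (hbeta_pos ω).le)
    have : ContinuousAt (fun t : ℝ =>
        1 - Real.exp (-(lam ω) * (t / (1 - t)) ^ (beta ω))) t₀ :=
      continuousAt_const.sub (continuousAt_const.mul hcomp).rexp
    simpa [hfdef] using this
  -- continuity of F on (0,1)
  have hFcont : ContinuousOn F (Ioo (0:ℝ) 1) := by
    intro t₀ ht₀
    have hFeq : F = fun t => ∫ ω, f t ω ∂μ := funext hF'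
    rw [ContinuousWithinAt, hFeq]
    refine tendsto_integral_filter_of_dominated_convergence (fun _ => (1:ℝ))
      ?_ ?_ (integrable_const 1) ?_
    · filter_upwards [self_mem_nhdsWithin] with t ht
      exact (hmeas t ht).aestronglyMeasurable
    · filter_upwards [self_mem_nhdsWithin] with t ht
      filter_upwards with ω
      have h := hbd t ht ω
      rw [Real.norm_eq_abs, abs_le]
      constructor <;> linarith [h.1, h.2]
    · filter_upwards with ω
      exact ((hptcont ω t₀ (Ioo_subset_Ico_self ht₀)).tendsto).mono_left nhdsWithin_le_nhds
  -- F tends to 0 at 0 (within (0,1))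
  have hF0 : Tendsto F (𝓝[Ioo (0:ℝ) 1] 0) (𝓝 0) := by
    have hFeq : F = fun t => ∫ ω, f t ω ∂μ := funext hF'
    have hT : Tendsto (fun t => ∫ ω, f t ω ∂μ) (𝓝[Ioo (0:ℝ) 1] 0)
        (𝓝 (∫ _ : Ω, (0:ℝ) ∂μ)) := by
      refine tendsto_integral_filter_of_dominated_convergence (fun _ => (1:ℝ))
        ?_ ?_ (integrable_const 1) ?_
      · filter_upwards [self_mem_nhdsWithin] with t ht
        exact (hmeas t ht).aestronglyMeasurable
      · filter_upwards [self_mem_nhdsWithin] with t ht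
        filter_upwards with ω
        have h := hbd t ht ω
        rw [Real.norm_eq_abs, abs_le]
        constructor <;> linarith [h.1, h.2]
      · filter_upwards with ω
        have hc : ContinuousAt (fun t : ℝ => f t ω) 0 := hptcont ω 0 ⟨le_refl 0, by norm_num⟩
        have hval : f 0 ω = 0 := by
          simp only [hfdef]
          rw [show (0:ℝ) / (1 - 0) = 0 by norm_num, Real.zero_rpow (hbeta_pos ω).ne']
          simp
        have := hc.tendsto.mono_left (nhdsWithin_le_nhds (s := Ioo (0:ℝ) 1))
        rwa [hval] at this
    rw [hFeq]
    simpa using hT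
  -- the filter 𝓝[Ioo 0 1] 0 is nontrivial
  have hnebot : (𝓝[Ioo (0:ℝ) 1] 0).NeBot := by
    refine mem_closure_iff_nhdsWithin_neBot.mp ?_
    rw [closure_Ioo (by norm_num : (0:ℝ) ≠ 1)]
    exact ⟨le_refl 0, by norm_num⟩
  -- get a with F a + a < 1, a < 1/2, a ∈ Ioo 0 1
  have hGa : ∃ a, a ∈ Ioo (0:ℝ) 1 ∧ F a + a < 1 ∧ a < 1/2 := by
    have hid : Tendsto (fun t : ℝ => t) (𝓝[Ioo (0:ℝ) 1] 0) (𝓝 0) :=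
      tendsto_id.mono_left nhdsWithin_le_nhds
    have hG : Tendsto (fun t => F t + t) (𝓝[Ioo (0:ℝ) 1] 0) (𝓝 0) := by
      have := hF0.add hid
      simpa using this
    have h1 : ∀ᶠ t in 𝓝[Ioo (0:ℝ) 1] 0, F t + t < 1 :=
      hG.eventually_lt_const (by norm_num : (0:ℝ) < 1)
    have h2 : ∀ᶠ t in 𝓝[Ioo (0:ℝ) 1] 0, t < 1/2 :=
      hid.eventually_lt_const (by norm_num : (0:ℝ) < 1/2)
    have h3 : ∀ᶠ t in 𝓝[Ioo (0:ℝ) 1] 0, t ∈ Ioo (0:ℝ) 1 := self_mem_nhdsWithin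
    obtain ⟨a, ha3, ha1, ha2⟩ := (h3.and (h1.and h2)).exists
    exact ⟨a, ha3, ha1, ha2⟩
  obtain ⟨a, haI, haG, ha2⟩ := hGa
  -- get b with F b + b > 1
  have hhalfI : (1:ℝ)/2 ∈ Ioo (0:ℝ) 1 := by norm_num
  have hc : 0 < F (1/2) := hposF _ hhalfI
  set m := min (F (1/2)) (1/2) with hm
  have hm0 : 0 < m := lt_min hc (by norm_num)
  have hm2 : m ≤ 1/2 := min_le_right _ _
  set b := 1 - m/2 with hb
  have hbI : b ∈ Ioo (0:ℝ) 1 := ⟨by simp only [hb]; linarith, by simp only [hb]; linarith⟩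
  have hhalf_le_b : (1:ℝ)/2 ≤ b := by simp only [hb]; linarith
  have hFb : F (1/2) ≤ F b := hmono _ _ hhalfI hbI hhalf_le_b
  have hGb : 1 < F b + b := by
    have : m ≤ F (1/2) := min_le_left _ _
    simp only [hb]; linarith
  -- IVT
  have hab : a ≤ b := le_trans ha2.le hhalf_le_b
  have hsub : Icc a b ⊆ Ioo (0:ℝ) 1 := fun x hx =>
    ⟨lt_of_lt_of_le haI.1 hx.1, lt_of_le_of_lt hx.2 hbI.2⟩
  have hGcont : ContinuousOn (fun t => F t + t) (Icc a b) :=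
    (hFcont.mono hsub).add continuousOn_id
  have hIVT := intermediate_value_Icc hab hGcont
  have h1mem : (1:ℝ) ∈ Icc (F a + a) (F b + b) := ⟨haG.le, hGb.le⟩
  obtain ⟨d, hdmem, hGd⟩ := hIVT h1mem
  have hGd' : F d + d = 1 := hGd
  refine ⟨d, ⟨hsub hdmem, hGd'⟩, ?_⟩
  intro e ⟨heI, heG⟩
  have hdI := hsub hdmem
  rcases lt_trichotomy e d with h | h | h
  · exfalso
    have := hmono e d heI hdI h.le
    linarith
  · exact h
  · exfalso
    have := hmono d e hdI heI h.le
    linarith
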